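/- Let ρ be a density matrix on ℂ^d and let Φ be a quantum channel on ℂ^d with Kraus operators {K_i}. Then I_ρ(Φ) ≤ V_ρ(Φ); equivalently, the classical uncertainty C_ρ(Φ) = V_ρ(Φ) − I_ρ(Φ) is nonnegative. -/

import Mathlib

open Matrix
open scoped ComplexOrder

noncomputable section

/-- The square root of a positive semidefinite matrix, as `Matrix.PosSemidef.sqrt` was defined
in the older Mathlib. -/
def Matrix.PosSemidef.sqrt {n 𝕜 : Type*} [Fintype n] [DecidableEq n] [RCLike 𝕜]
    {A : Matrix n n 𝕜} (hA : A.PosSemidef) : Matrix n n 𝕜 :=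
  hA.1.eigenvectorUnitary.1 * diagonal ((↑) ∘ Real.sqrt ∘ hA.1.eigenvalues) *
  (star hA.1.eigenvectorUnitary : Matrix n n 𝕜)

/-- Variance of an operator `K` with respect to a state `ρ`:
`V_ρ(K) = ½ tr((K†K + KK†)ρ) − |tr(Kρ)|²`. -/
def opVar {d : ℕ} (ρ K : Matrix (Fin d) (Fin d) ℂ) : ℝ :=
  (((Kᴴ * K + K * Kᴴ) * ρ).trace).re / 2 - ‖(K * ρ).trace‖ ^ 2

/-- Variance of a channel with Kraus operators `K i`: `V_ρ(Φ) = Σ_i V_ρ(K_i)`. -/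
def chanVar {d n : ℕ} (ρ : Matrix (Fin d) (Fin d) ℂ)
    (K : Fin n → Matrix (Fin d) (Fin d) ℂ) : ℝ :=
  ∑ i, opVar ρ (K i)

/-- Wigner–Yanase skew information of a channel with Kraus operators `K i`:
`I_ρ(Φ) = ½ Σ_i ‖[√ρ, K_i]‖_F²`, where `√ρ` is the PSD square root of `ρ`. -/
def chanSkew {d n : ℕ} (ρ : Matrix (Fin d) (Fin d) ℂ) (hρ : ρ.PosSemidef)
    (K : Fin n → Matrix (Fin d) (Fin d) ℂ) : ℝ :=
  (1 / 2) * ∑ i,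
    (((hρ.sqrt * K i - K i * hρ.sqrt)ᴴ * (hρ.sqrt * K i - K i * hρ.sqrt)).trace).re

/-- Quantum uncertainty of a channel:
`Q_ρ(Φ) = √(V_ρ(Φ)² − (V_ρ(Φ) − I_ρ(Φ))²)`. -/
def chanQ {d n : ℕ} (ρ : Matrix (Fin d) (Fin d) ℂ) (hρ : ρ.PosSemidef)
    (K : Fin n → Matrix (Fin d) (Fin d) ℂ) : ℝ :=
  Real.sqrt ((chanVar ρ K) ^ 2 - (chanVar ρ K - chanSkew ρ hρ K) ^ 2)

namespace Matrix.PosSemidef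

lemma posSemidef_sqrt {n 𝕜 : Type*} [Fintype n] [DecidableEq n] [RCLike 𝕜]
    {A : Matrix n n 𝕜} (hA : A.PosSemidef) : hA.sqrt.PosSemidef := by
  unfold Matrix.PosSemidef.sqrt
  have := (PosSemidef.diagonal (R := 𝕜) (d := ((↑) ∘ Real.sqrt ∘ hA.1.eigenvalues))
    (fun i => RCLike.ofReal_nonneg.mpr (Real.sqrt_nonneg _))).mul_mul_conjTranspose_same
    (hA.1.eigenvectorUnitary : Matrix n n 𝕜)
  simpa [Matrix.star_eq_conjTranspose] using this

lemma sqrt_mul_self {n 𝕜 : Type*} [Fintype n] [DecidableEq n] [RCLike 𝕜]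
    {A : Matrix n n 𝕜} (hA : A.PosSemidef) : hA.sqrt * hA.sqrt = A := by
  unfold Matrix.PosSemidef.sqrt
  conv_rhs => rw [hA.1.spectral_theorem, Unitary.conjStarAlgAut_apply]
  have hU := Unitary.coe_star_mul_self hA.1.eigenvectorUnitary
  simp only [Matrix.mul_assoc]
  rw [← Matrix.mul_assoc (star _ : Matrix n n 𝕜) _ _, hU, Matrix.one_mul,
    ← Matrix.mul_assoc (diagonal _) (diagonal _), diagonal_mul_diagonal]
  congr 2
  congr 1
  congr 1
  funext i
  simp only [Function.comp_apply, ← RCLike.ofReal_mul,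
    Real.mul_self_sqrt (hA.eigenvalues_nonneg i)]

end Matrix.PosSemidef

/-- Cauchy–Schwarz for the trace inner product, with a Hermitian left factor. -/
lemma cs_aux {d : ℕ} (s M : Matrix (Fin d) (Fin d) ℂ) (hs : sᴴ = s) :
    ‖(s * M).trace‖ ^ 2 ≤ ((s * s).trace).re * ((Mᴴ * M).trace).re := by
  classical
  set v : EuclideanSpace ℂ (Fin d × Fin d) := WithLp.toLp 2 (fun p : Fin d × Fin d => s p.1 p.2) with hv
  set w : EuclideanSpace ℂ (Fin d × Fin d) := WithLp.toLp 2 (fun p : Fin d × Fin d => M p.1 p.2) with hw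
  have hsc : ∀ j k, (starRingEnd ℂ) (s k j) = s j k := by
    intro j k; conv_rhs => rw [← hs]
    simp [conjTranspose_apply]
  have hinner : inner ℂ v w = (s * M).trace := by
    simp only [PiLp.inner_apply, RCLike.inner_apply, Matrix.trace, Matrix.diag,
      Matrix.mul_apply, hv, hw, PiLp.toLp_apply]
    rw [Fintype.sum_prod_type, Finset.sum_comm]
    exact Finset.sum_congr rfl fun j _ => Finset.sum_congr rfl fun k _ => by rw [hsc]; exact mul_comm _ _
  have hvv : (inner ℂ v v : ℂ).re = ((s * s).trace).re := by
    have h2 : (inner ℂ v v : ℂ) = (sᴴ * s).trace := by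
      simp only [PiLp.inner_apply, RCLike.inner_apply, Matrix.trace, Matrix.diag,
        Matrix.mul_apply, hv, conjTranspose_apply, PiLp.toLp_apply]
      rw [Fintype.sum_prod_type, Finset.sum_comm]
      simp [RCLike.star_def, mul_comm]
    rw [h2, hs]
  have hww : (inner ℂ w w : ℂ).re = ((Mᴴ * M).trace).re := by
    have h2 : (inner ℂ w w : ℂ) = (Mᴴ * M).trace := by
      simp only [PiLp.inner_apply, RCLike.inner_apply, Matrix.trace, Matrix.diag,
        Matrix.mul_apply, hw, conjTranspose_apply, PiLp.toLp_apply]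
      rw [Fintype.sum_prod_type, Finset.sum_comm]
      simp [RCLike.star_def, mul_comm]
    rw [h2]
  have hcs := norm_inner_le_norm (𝕜 := ℂ) v w
  have h1 : ‖(s * M).trace‖ = ‖(inner ℂ v w : ℂ)‖ := by
    rw [hinner]
  have h2 : ‖(inner ℂ v w : ℂ)‖ ^ 2 ≤ (‖v‖ * ‖w‖) ^ 2 :=
    pow_le_pow_left₀ (norm_nonneg _) hcs 2
  rw [h1]
  calc ‖(inner ℂ v w : ℂ)‖ ^ 2 ≤ (‖v‖ * ‖w‖) ^ 2 := h2
    _ = ‖v‖ ^ 2 * ‖w‖ ^ 2 := by ring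
    _ = ((s * s).trace).re * ((Mᴴ * M).trace).re := by
        have hv2 := inner_self_eq_norm_sq (𝕜 := ℂ) v
        have hw2 := inner_self_eq_norm_sq (𝕜 := ℂ) w
        simp only [RCLike.re_to_complex] at hv2 hw2
        rw [← hvv, ← hww, ← hv2, ← hw2]

/-- The key Cauchy–Schwarz bound with an abstract fourth root. -/
lemma cross_core {d : ℕ} (ρ K s q : Matrix (Fin d) (Fin d) ℂ)
    (hsH : sᴴ = s) (hss : s * s = ρ) (hqH : qᴴ = q) (hqq : q * q = s)
    (htr : ρ.trace = 1) :
    ‖(K * ρ).trace‖ ^ 2 ≤ ((s * Kᴴ * s * K).trace).re := by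
  have e1 : (s * (q * K * q)).trace = (K * ρ).trace := by
    have A1 : s * (q * K * q) = q * ((q * q * K) * q) := by rw [← hqq]; noncomm_ring
    rw [A1, Matrix.trace_mul_comm]
    have A2 : ((q * q * K) * q) * q = (q * q) * (K * (q * q)) := by noncomm_ring
    rw [A2, Matrix.trace_mul_comm]
    have A3 : (K * (q * q)) * (q * q) = K * ρ := by
      rw [hqq, Matrix.mul_assoc, hss]
    rw [A3]
  have e2 : ((q * K * q)ᴴ * (q * K * q)).trace = (s * Kᴴ * s * K).trace := by
    have B1 : (q * K * q)ᴴ * (q * K * q) = q * ((Kᴴ * (q * q) * K) * q) := by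
      rw [conjTranspose_mul, conjTranspose_mul, hqH]; noncomm_ring
    rw [B1, Matrix.trace_mul_comm]
    have B2 : ((Kᴴ * (q * q) * K) * q) * q = (Kᴴ * s * K) * s := by
      rw [hqq, Matrix.mul_assoc, hqq]
    rw [B2, Matrix.trace_mul_comm]
    congr 1
    noncomm_ring
  have h := cs_aux s (q * K * q) hsH
  rw [e1, e2, hss, htr] at h
  simpa using h

/-- The key Cauchy–Schwarz bound: `|tr(Kρ)|² ≤ Re tr(√ρ K† √ρ K)`. -/
lemma cross_bound {d : ℕ} (ρ K : Matrix (Fin d) (Fin d) ℂ) (hρ : ρ.PosSemidef)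
    (htr : ρ.trace = 1) :
    ‖(K * ρ).trace‖ ^ 2 ≤ ((hρ.sqrt * Kᴴ * hρ.sqrt * K).trace).re :=
  cross_core ρ K hρ.sqrt hρ.posSemidef_sqrt.sqrt hρ.posSemidef_sqrt.1
    hρ.sqrt_mul_self hρ.posSemidef_sqrt.posSemidef_sqrt.1
    hρ.posSemidef_sqrt.sqrt_mul_self htr

/-- Per-Kraus-operator inequality: the skew term is at most the variance term. -/
lemma key_ineq {d : ℕ} (ρ K : Matrix (Fin d) (Fin d) ℂ) (hρ : ρ.PosSemidef)
    (htr : ρ.trace = 1) :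
    (1/2 : ℝ) * (((hρ.sqrt * K - K * hρ.sqrt)ᴴ * (hρ.sqrt * K - K * hρ.sqrt)).trace).re ≤
      opVar ρ K := by
  have hcs := cross_bound ρ K hρ htr
  unfold opVar
  set s := hρ.sqrt with hsdef
  have hsH : sᴴ = s := hρ.posSemidef_sqrt.1
  have hss : s * s = ρ := hρ.sqrt_mul_self
  have expand : (s * K - K * s)ᴴ * (s * K - K * s)
      = Kᴴ * (s * s) * K + s * (Kᴴ * K) * s - (Kᴴ * s * (K * s) + s * Kᴴ * (s * K)) := by
    rw [conjTranspose_sub, conjTranspose_mul, conjTranspose_mul, hsH]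
    noncomm_ring
  have htr1 : (Kᴴ * (s * s) * K).trace = (K * Kᴴ * ρ).trace := by
    rw [hss, Matrix.trace_mul_cycle]
  have htr2 : (s * (Kᴴ * K) * s).trace = (Kᴴ * K * ρ).trace := by
    rw [Matrix.trace_mul_cycle, ← Matrix.mul_assoc, Matrix.mul_assoc, hss,
      Matrix.trace_mul_comm]
  have htr3 : (Kᴴ * s * (K * s)).trace = star ((s * Kᴴ * (s * K)).trace) := by
    rw [← Matrix.trace_conjTranspose]
    refine congrArg Matrix.trace ?_
    rw [conjTranspose_mul, conjTranspose_mul, conjTranspose_mul, conjTranspose_conjTranspose, hsH]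
  have hassoc : (s * Kᴴ * (s * K)) = s * Kᴴ * s * K := by noncomm_ring
  have hmain : (((s * K - K * s)ᴴ * (s * K - K * s)).trace).re
      = (((Kᴴ * K + K * Kᴴ) * ρ).trace).re - 2 * ((s * Kᴴ * s * K).trace).re := by
    rw [expand, Matrix.trace_sub, Matrix.trace_add, Matrix.trace_add, htr1, htr2, htr3,
      hassoc, Matrix.add_mul, Matrix.trace_add]
    simp [Complex.add_re, Complex.sub_re]
    ring
  rw [hmain]
  nlinarith [hcs]

/-- The skew information of a channel is bounded by its variance:
`I_ρ(Φ) ≤ V_ρ(Φ)`, i.e. the classical uncertainty `C_ρ(Φ) = V_ρ(Φ) − I_ρ(Φ)` is nonnegative. -/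
theorem stmt_6 {d n : ℕ}
    (ρ : Matrix (Fin d) (Fin d) ℂ) (hρ : ρ.PosSemidef) (htr : ρ.trace = 1)
    (K : Fin n → Matrix (Fin d) (Fin d) ℂ) (hK : ∑ i, (K i)ᴴ * K i = 1) :
    chanSkew ρ hρ K ≤ chanVar ρ K := by
  unfold chanSkew chanVar
  rw [Finset.mul_sum]
  exact Finset.sum_le_sum fun i _ => key_ineq ρ (K i) hρ htr
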